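/- Let k and p be positive integers with pk ≥ 3, and let C_{pk}: u_1 u_2 … u_{pk} u_1 be the cycle of order pk. A set X of vertices of C_{pk} is a minimum k-vertex cover in C_{pk} if and only if X = { u_{i+(j−1)k} : j ∈ {1,…,p} } for some i ∈ {1,…,k} (indices taken modulo pk). -/

import Mathlib

open SimpleGraph

/-- `S` is the vertex set of a (not necessarily induced) path of order `k` in `G`,
i.e. a `k`-path of `G`. -/
def IsPathSupport {V : Type*} (k : ℕ) (G : SimpleGraph V) (S : Set V) : Prop :=
  ∃ (u v : V) (p : G.Walk u v), p.IsPath ∧ p.support.length = k ∧ S = {x | x ∈ p.support}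

/-- `X` is a `k`-vertex cover of `G`: every `k`-path of `G` contains a vertex of `X`. -/
def IsKVertexCover {V : Type*} (k : ℕ) (G : SimpleGraph V) (X : Finset V) : Prop :=
  ∀ S : Set V, IsPathSupport k G S → ∃ x ∈ X, x ∈ S

/-- The `k`-matching number `ν_k(G)`: the maximum number of pairwise disjoint
`k`-paths of `G`. -/
noncomputable def nuK {V : Type*} (k : ℕ) (G : SimpleGraph V) : ℕ :=
  sSup {n | ∃ M : Finset (Set V), (∀ S ∈ M, IsPathSupport k G S) ∧
    (↑M : Set (Set V)).Pairwise Disjoint ∧ M.card = n}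

/-- The `k`-vertex cover number `τ_k(G)`: the minimum cardinality of a `k`-vertex cover. -/
noncomputable def tauK {V : Type*} (k : ℕ) (G : SimpleGraph V) : ℕ :=
  sInf {n | ∃ X : Finset V, IsKVertexCover k G X ∧ X.card = n}

/-- `G` belongs to the class `𝒢_k`: `ν_k(H) = τ_k(H)` for every induced subgraph `H` of `G`. -/
def memGclass {V : Type*} (k : ℕ) (G : SimpleGraph V) : Prop :=
  ∀ s : Set V, nuK k (G.induce s) = tauK k (G.induce s)

/-- The cycle graph of order `n`, with vertex set `ZMod n` (for `n ≥ 3`);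
the vertex `u_t` of the paper is `(t : ZMod n)`. -/
def cycleG (n : ℕ) : SimpleGraph (ZMod n) :=
  SimpleGraph.fromRel (fun x y => y = x + 1)


lemma cycleG_adj {n : ℕ} {x y : ZMod n} :
    (cycleG n).Adj x y ↔ x ≠ y ∧ (y = x + 1 ∨ x = y + 1) := by
  simp [cycleG, SimpleGraph.fromRel_adj]

lemma cyc_one_ne_zero {n : ℕ} (hn : 3 ≤ n) : (1 : ZMod n) ≠ 0 := by
  haveI : NeZero n := ⟨by omega⟩
  have : ((1:ℕ) : ZMod n) ≠ 0 := by
    rw [Ne, ZMod.natCast_eq_zero_iff]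
    intro h
    have := Nat.le_of_dvd one_pos h
    omega
  simpa using this

lemma adj_succ {n : ℕ} (hn : 3 ≤ n) (a : ZMod n) : (cycleG n).Adj a (a+1) := by
  rw [cycleG_adj]
  refine ⟨?_, Or.inl rfl⟩
  intro h
  have := cyc_one_ne_zero hn
  apply this
  have : a + 1 - a = a - a := by rw [← h]
  simpa using this

noncomputable def arcWalk (n : ℕ) (hn : 3 ≤ n) (a : ZMod n) : (m : ℕ) → (cycleG n).Walk a (a + (m : ZMod n))
  | 0 => Walk.nil.copy rfl (by simp)
  | (m+1) => (Walk.cons (adj_succ hn a) (arcWalk n hn (a+1) m)).copy rfl (by push_cast; ring)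

lemma arcWalk_support (n : ℕ) (hn : 3 ≤ n) (a : ZMod n) (m : ℕ) :
    (arcWalk n hn a m).support = (List.range (m+1)).map (fun i : ℕ => a + (i : ZMod n)) := by
  induction m generalizing a with
  | zero => simp [arcWalk, List.range_succ]
  | succ m ih =>
    rw [arcWalk]
    rw [Walk.support_copy, Walk.support_cons, ih]
    conv_rhs => rw [List.range_succ_eq_map, List.map_cons, List.map_map]
    congr 1
    · norm_num
    · apply List.map_congr_left
      intro i _
      simp only [Function.comp_apply]
      push_cast
      ring

lemma cast_inj_of_lt {n : ℕ} {a b : ℕ} (ha : a < n) (hb : b < n) (h : (a : ZMod n) = b) : a = b := by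
  haveI : NeZero n := ⟨by omega⟩
  rw [← ZMod.val_cast_of_lt ha, ← ZMod.val_cast_of_lt hb, h]

def windowSet (n k : ℕ) (a : ZMod n) : Set (ZMod n) := {x | ∃ m < k, x = a + (m : ZMod n)}

lemma window_isPathSupport {n k : ℕ} (hn : 3 ≤ n) (hk : 1 ≤ k) (hkn : k ≤ n) (a : ZMod n) :
    IsPathSupport k (cycleG n) (windowSet n k a) := by
  refine ⟨a, a + ((k-1 : ℕ) : ZMod n), arcWalk n hn a (k-1), ?_, ?_, ?_⟩
  · rw [Walk.isPath_def, arcWalk_support]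
    refine List.Nodup.map_on ?_ List.nodup_range
    intro i hi j hj hij
    rw [List.mem_range] at hi hj
    exact cast_inj_of_lt (by omega) (by omega) (add_left_cancel hij)
  · rw [arcWalk_support, List.length_map, List.length_range]; omega
  · rw [arcWalk_support]
    ext x
    simp only [windowSet, Set.mem_setOf_eq, List.mem_map, List.mem_range]
    constructor
    · rintro ⟨m, hm, rfl⟩; exact ⟨m, by omega, rfl⟩
    · rintro ⟨i, hi, rfl⟩; exact ⟨i, by omega, rfl⟩

lemma path_support_arc {n : ℕ} (hn : 3 ≤ n) {u v : ZMod n} (w : (cycleG n).Walk u v) :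
    w.IsPath →
    (({x | x ∈ w.support} = {x | ∃ m < w.length + 1, x = u + (m : ZMod n)}) ∨
    ({x | x ∈ w.support} = {x | ∃ m < w.length + 1, x = u - (m : ZMod n)})) := by
  induction w with
  | nil =>
    intro _
    left; ext x
    simp only [Walk.support_nil, List.mem_cons, List.not_mem_nil, or_false, Set.mem_setOf_eq,
      Walk.length_nil]
    constructor
    · rintro rfl; exact ⟨0, by omega, by simp⟩
    · rintro ⟨m, hm, rfl⟩
      interval_cases m
      simp
  | @cons a b c h q ih =>
    intro hw
    rw [Walk.cons_isPath_iff] at hw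
    obtain ⟨hq, hans⟩ := hw
    rcases cycleG_adj.mp h with ⟨hne, hb | hb⟩
    · -- b = a + 1 : increasing step
      rcases ih hq with hinc | hdec
      · left; ext x
        have hx : x ∈ q.support ↔ ∃ m < q.length + 1, x = b + (m : ZMod n) :=
          Set.ext_iff.mp hinc x
        simp only [Walk.support_cons, List.mem_cons, Set.mem_setOf_eq, Walk.length_cons]
        constructor
        · rintro (rfl | hxs)
          · exact ⟨0, by omega, by simp⟩
          · obtain ⟨m, hm, rfl⟩ := hx.mp hxs
            exact ⟨m + 1, by omega, by rw [hb]; push_cast; ring⟩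
        · rintro ⟨m, hm, rfl⟩
          match m with
          | 0 => left; simp
          | (m'+1) =>
            right
            refine hx.mpr ⟨m', by omega, ?_⟩
            rw [hb]; push_cast; ring
      · -- decreasing tail after increasing step
        have hx : ∀ x, x ∈ q.support ↔ ∃ m < q.length + 1, x = b - (m : ZMod n) :=
          fun x => Set.ext_iff.mp hdec x
        rcases Nat.eq_zero_or_pos q.length with h0 | hpos
        · left; ext x
          have hx' : x ∈ q.support ↔ x = b := by
            rw [hx x, h0]
            constructor
            · rintro ⟨m, hm, rfl⟩; interval_cases m; simp
            · rintro rfl; exact ⟨0, by omega, by simp⟩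
          simp only [Walk.support_cons, List.mem_cons, Set.mem_setOf_eq, Walk.length_cons, h0,
            hx']
          constructor
          · rintro (rfl | rfl)
            · exact ⟨0, by omega, by simp⟩
            · exact ⟨1, by omega, by rw [hb]; push_cast; ring⟩
          · rintro ⟨m, hm, rfl⟩
            interval_cases m
            · left; simp
            · right; rw [hb]; push_cast; ring
        · exfalso
          apply hans
          refine (hx a).mpr ⟨1, by omega, ?_⟩
          rw [hb]; push_cast; ring
    · -- a = b + 1 : decreasing step
      rcases ih hq with hinc | hdec
      · -- increasing tail after decreasing step
        have hx : ∀ x, x ∈ q.support ↔ ∃ m < q.length + 1, x = b + (m : ZMod n) :=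
          fun x => Set.ext_iff.mp hinc x
        rcases Nat.eq_zero_or_pos q.length with h0 | hpos
        · right; ext x
          have hx' : x ∈ q.support ↔ x = b := by
            rw [hx x, h0]
            constructor
            · rintro ⟨m, hm, rfl⟩; interval_cases m; simp
            · rintro rfl; exact ⟨0, by omega, by simp⟩
          simp only [Walk.support_cons, List.mem_cons, Set.mem_setOf_eq, Walk.length_cons, h0,
            hx']
          constructor
          · rintro (rfl | rfl)
            · exact ⟨0, by omega, by simp⟩
            · exact ⟨1, by omega, by rw [hb]; push_cast; ring⟩
          · rintro ⟨m, hm, rfl⟩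
            interval_cases m
            · left; simp
            · right; rw [hb]; push_cast; ring
        · exfalso
          apply hans
          refine (hx a).mpr ⟨1, by omega, ?_⟩
          rw [hb]; push_cast; ring
      · right; ext x
        have hx : x ∈ q.support ↔ ∃ m < q.length + 1, x = b - (m : ZMod n) :=
          Set.ext_iff.mp hdec x
        simp only [Walk.support_cons, List.mem_cons, Set.mem_setOf_eq, Walk.length_cons]
        constructor
        · rintro (rfl | hxs)
          · exact ⟨0, by omega, by simp⟩
          · obtain ⟨m, hm, rfl⟩ := hx.mp hxs
            exact ⟨m + 1, by omega, by rw [hb]; push_cast; ring⟩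
        · rintro ⟨m, hm, rfl⟩
          match m with
          | 0 => left; simp
          | (m'+1) =>
            right
            refine hx.mpr ⟨m', by omega, ?_⟩
            rw [hb]; push_cast; ring

lemma pathSupport_window {n k : ℕ} (hn : 3 ≤ n) {S : Set (ZMod n)}
    (hS : IsPathSupport k (cycleG n) S) : ∃ a, S = windowSet n k a := by
  obtain ⟨u, v, w, hw, hlen, rfl⟩ := hS
  have hl : w.length + 1 = k := by rw [← hlen, Walk.length_support]
  rcases path_support_arc hn w hw with hinc | hdec
  · exact ⟨u, by rw [hinc, ← hl]; rfl⟩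
  · refine ⟨u - ((k-1 : ℕ) : ZMod n), ?_⟩
    rw [hdec]
    ext x
    simp only [windowSet, Set.mem_setOf_eq, hl]
    constructor
    · rintro ⟨m, hm, rfl⟩
      refine ⟨k - 1 - m, by omega, ?_⟩
      have : ((k-1 : ℕ) : ZMod n) = ((m : ℕ) : ZMod n) + ((k-1-m : ℕ) : ZMod n) := by
        rw [← Nat.cast_add]
        congr 1
        omega
      rw [this]
      ring
    · rintro ⟨m, hm, rfl⟩
      refine ⟨k - 1 - m, by omega, ?_⟩
      have : ((k-1 : ℕ) : ZMod n) = ((k-1-m : ℕ) : ZMod n) + ((m : ℕ) : ZMod n) := by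
        rw [← Nat.cast_add]
        congr 1
        omega
      rw [this]
      ring

/-! ### Arithmetic helpers -/

lemma div_unique_helper {k j m j' m' : ℕ} (hk : 0 < k) (hm : m < k) (hm' : m' < k)
    (h : j * k + m = j' * k + m') : j = j' ∧ m = m' := by
  have h1 : (k * j + m) / k = j + m / k := Nat.mul_add_div hk j m
  have h2 : (k * j' + m') / k = j' + m' / k := Nat.mul_add_div hk j' m'
  have hmz : m / k = 0 := Nat.div_eq_of_lt hm
  have hmz' : m' / k = 0 := Nat.div_eq_of_lt hm'
  have e : k * j + m = k * j' + m' := by rw [mul_comm k j, mul_comm k j']; exact h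
  have : j = j' := by rw [e] at h1; rw [h1, hmz'] at h2; omega
  subst this
  exact ⟨rfl, by omega⟩

lemma mod_small_cases {n a b : ℕ} (hn : 0 < n) (h : a % n = b % n) (ha : a < 2*n) (hb : b < 2*n) :
    a = b ∨ a = b + n ∨ b = a + n := by
  have key : ∀ c : ℕ, c < 2*n → c % n = c ∨ (n ≤ c ∧ c % n = c - n) := by
    intro c hc
    rcases Nat.lt_or_ge c n with h1 | h1
    · exact Or.inl (Nat.mod_eq_of_lt h1)
    · right
      refine ⟨h1, ?_⟩
      rw [Nat.mod_eq_sub_mod h1, Nat.mod_eq_of_lt (by omega)]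
  rcases key a ha with h1 | ⟨h1, h1'⟩ <;> rcases key b hb with h2 | ⟨h2, h2'⟩ <;> omega

lemma cast_inj_Icc {n : ℕ} (hn : 0 < n) {a b : ℕ} (ha1 : 1 ≤ a) (ha : a ≤ n) (hb1 : 1 ≤ b)
    (hb : b ≤ n) (h : (a : ZMod n) = (b : ZMod n)) : a = b := by
  haveI : NeZero n := ⟨by omega⟩
  rcases Nat.lt_or_ge a n with h1 | h1
  · rcases Nat.lt_or_ge b n with h2 | h2
    · exact cast_inj_of_lt h1 h2 h
    · have hb' : b = n := by omega
      subst hb'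
      rw [ZMod.natCast_self] at h
      rw [ZMod.natCast_eq_zero_iff] at h
      have := Nat.le_of_dvd (by omega) h
      omega
  · have ha' : a = n := by omega
    subst ha'
    rw [ZMod.natCast_self] at h
    have h' := h.symm
    rw [ZMod.natCast_eq_zero_iff] at h'
    have := Nat.le_of_dvd (by omega) h'
    omega

lemma exists_shift (t i k : ℕ) (hk : 0 < k) : ∃ m < k, (t + m) % k = i % k := by
  refine ⟨(i % k + k - t % k) % k, Nat.mod_lt _ hk, ?_⟩
  have hr : t % k < k := Nat.mod_lt _ hk
  have hs : i % k < k := Nat.mod_lt _ hk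
  rw [Nat.add_mod t]
  rw [Nat.mod_mod_of_dvd _ dvd_rfl]
  rcases le_or_gt (t % k) (i % k) with hle | hlt
  · have e1 : i % k + k - t % k = (i % k - t % k) + k := by omega
    rw [e1, Nat.add_mod_right, Nat.mod_eq_of_lt (show i % k - t % k < k by omega)]
    have e2 : t % k + (i % k - t % k) = i % k := by omega
    rw [e2, Nat.mod_eq_of_lt hs]
  · rw [Nat.mod_eq_of_lt (show i % k + k - t % k < k by omega)]
    have e2 : t % k + (i % k + k - t % k) = i % k + k := by omega
    rw [e2, Nat.add_mod_right, Nat.mod_eq_of_lt hs]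

lemma exists_j {k p : ℕ} (hk : 0 < k) (hp : 0 < p) {i : ℕ} (hi1 : 1 ≤ i) (hik : i ≤ k)
    (s : ℕ) (hs : s % k = i % k) :
    ∃ j ∈ Finset.Icc 1 p, ((i + (j - 1) * k : ℕ) : ZMod (p * k)) = (s : ZMod (p * k)) := by
  have hkpk : k ≤ p * k := Nat.le_mul_of_pos_left k hp
  have hile : i ≤ s + p * k := by omega
  have hmod : i ≡ s + p * k [MOD k] := by
    have h1 : (s + p * k) % k = s % k := Nat.add_mul_mod_self_right s p k
    unfold Nat.ModEq
    omega
  have hdvd : k ∣ s + p * k - i := (Nat.modEq_iff_dvd' hile).mp hmod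
  obtain ⟨d, hd⟩ := hdvd
  have hsd : s + p * k = i + k * d := by omega
  refine ⟨d % p + 1, Finset.mem_Icc.mpr ⟨by omega, by have := Nat.mod_lt d hp; omega⟩, ?_⟩
  have hj1 : d % p + 1 - 1 = d % p := by omega
  rw [hj1, ZMod.natCast_eq_natCast_iff]
  unfold Nat.ModEq
  have e1 : i + d % p * k + (d / p) * (p * k) = i + k * d := by
    have : d = p * (d / p) + d % p := (Nat.div_add_mod d p).symm
    calc i + d % p * k + (d / p) * (p * k) = i + (p * (d / p) + d % p) * k := by ring
    _ = i + k * d := by rw [← this]; ring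
  calc (i + d % p * k) % (p * k) = (i + d % p * k + (d / p) * (p * k)) % (p * k) :=
        (Nat.add_mul_mod_self_right _ _ _).symm
    _ = (s + p * k) % (p * k) := by rw [e1, ← hsd]
    _ = s % (p * k) := Nat.add_mod_right s (p * k)

def WF (n k : ℕ) (a : ZMod n) : Finset (ZMod n) :=
  (Finset.range k).image (fun m : ℕ => a + (m : ZMod n))

lemma mem_WF {n k : ℕ} {a x : ZMod n} : x ∈ WF n k a ↔ ∃ m < k, x = a + (m : ZMod n) := by
  simp only [WF, Finset.mem_image, Finset.mem_range]
  constructor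
  · rintro ⟨m, hm, rfl⟩; exact ⟨m, hm, rfl⟩
  · rintro ⟨m, hm, rfl⟩; exact ⟨m, hm, rfl⟩

lemma pk_prod_bound {k p j : ℕ} (hj : j < p) : j * k + k ≤ p * k := by
  have h1 : j * k ≤ (p-1) * k := Nat.mul_le_mul_right k (by omega)
  have h2 : (p-1) * k + k = p * k := by
    have e : p - 1 + 1 = p := by omega
    calc (p-1) * k + k = (p-1+1) * k := by ring
      _ = p * k := by rw [e]
  linarith

lemma window_base_eq {k p : ℕ} (hk : 0 < k) (hp : 0 < p) {d j m j' m' : ℕ} (hd : d < k)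
    (hj : j < p) (hj' : j' < p) (hm : m < k) (hm' : m' < k)
    (h : ((d + j * k + m : ℕ) : ZMod (p * k)) = ((d + j' * k + m' : ℕ) : ZMod (p * k))) :
    j = j' ∧ m = m' := by
  have hb : d + j * k + m < 2 * (p * k) := by
    have := pk_prod_bound (k := k) hj
    have hkpk : k ≤ p * k := Nat.le_mul_of_pos_left k hp
    linarith
  have hb' : d + j' * k + m' < 2 * (p * k) := by
    have := pk_prod_bound (k := k) hj'
    have hkpk : k ≤ p * k := Nat.le_mul_of_pos_left k hp
    linarith
  have hpk : 0 < p * k := Nat.mul_pos hp hk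
  rw [ZMod.natCast_eq_natCast_iff] at h
  rcases mod_small_cases hpk h hb hb' with hc | hc | hc
  · have : j * k + m = j' * k + m' := by omega
    exact div_unique_helper hk hm hm' this
  · exfalso
    have e : j' * k + m' + p * k = (j' + p) * k + m' := by ring
    have : j * k + m = (j' + p) * k + m' := by omega
    have := (div_unique_helper hk hm hm' this).1
    omega
  · exfalso
    have e : j * k + m + p * k = (j + p) * k + m := by ring
    have : j' * k + m' = (j + p) * k + m := by omega
    have := (div_unique_helper hk hm' hm this).1
    omega

lemma WF_pairwise_disjoint {k p : ℕ} (hk : 0 < k) (hp : 0 < p) {d : ℕ} (hd : d < k)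
    {j j' : ℕ} (hj : j < p) (hj' : j' < p) (hne : j ≠ j') :
    Disjoint (WF (p*k) k (((d + j * k : ℕ)) : ZMod (p*k)))
      (WF (p*k) k (((d + j' * k : ℕ)) : ZMod (p*k))) := by
  rw [Finset.disjoint_left]
  intro x hx hx'
  obtain ⟨m, hm, rfl⟩ := mem_WF.mp hx
  obtain ⟨m', hm', he⟩ := mem_WF.mp hx'
  rw [← Nat.cast_add, ← Nat.cast_add] at he
  exact hne (window_base_eq hk hp hd hj hj' hm hm' he).1

lemma cover_hits_WF {k p : ℕ} (h3 : 3 ≤ p * k) (hk : 0 < k) (hp : 0 < p) {X : Finset (ZMod (p*k))}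
    (hX : IsKVertexCover k (cycleG (p*k)) X) (a : ZMod (p*k)) :
    ∃ x, x ∈ X ∩ WF (p*k) k a := by
  have hkpk : k ≤ p * k := Nat.le_mul_of_pos_left k hp
  obtain ⟨x, hx1, hx2⟩ := hX _ (window_isPathSupport h3 hk hkpk a)
  exact ⟨x, Finset.mem_inter.mpr ⟨hx1, mem_WF.mpr hx2⟩⟩

lemma val_decomp {k p : ℕ} (hk : 0 < k) (hp : 0 < p) (h3 : 3 ≤ p * k) (a : ZMod (p*k)) :
    a = ((a.val % k + (a.val / k) * k : ℕ) : ZMod (p*k)) ∧ a.val % k < k ∧ a.val / k < p := by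
  haveI : NeZero (p*k) := ⟨by omega⟩
  have h1 : a.val % k + a.val / k * k = a.val := Nat.mod_add_div' a.val k
  have h2 : a.val < p * k := a.val_lt
  refine ⟨?_, Nat.mod_lt _ hk, (Nat.div_lt_iff_lt_mul hk).mpr h2⟩
  rw [h1, ZMod.natCast_rightInverse a]

lemma cover_card_ge {k p : ℕ} (h3 : 3 ≤ p * k) (hk : 0 < k) (hp : 0 < p)
    {X : Finset (ZMod (p*k))} (hX : IsKVertexCover k (cycleG (p*k)) X) : p ≤ X.card := by
  classical
  have hch : ∀ j : ℕ, ∃ x, j < p → x ∈ X ∩ WF (p*k) k (((0 + j * k : ℕ)) : ZMod (p*k)) := by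
    intro j
    rcases Nat.lt_or_ge j p with hj | hj
    · obtain ⟨x, hx⟩ := cover_hits_WF h3 hk hp hX _
      exact ⟨x, fun _ => hx⟩
    · exact ⟨0, fun h => absurd h (by omega)⟩
  choose f hf using hch
  have hinj : Set.InjOn f (Finset.range p) := by
    intro j hj j' hj' hke
    simp only [Finset.coe_range, Set.mem_Iio] at hj hj'
    by_contra hne
    have h1 := Finset.mem_inter.mp (hf j hj)
    have h2 := Finset.mem_inter.mp (hf j' hj')
    have := WF_pairwise_disjoint hk hp hk hj hj' hne
    rw [Finset.disjoint_left] at this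
    exact this h1.2 (hke ▸ h2.2)
  have := Finset.card_le_card_of_injOn f
    (fun j hj => (Finset.mem_inter.mp (hf j (Finset.mem_range.mp hj))).1) hinj
  simpa using this

lemma cover_window_card_one {k p : ℕ} (h3 : 3 ≤ p * k) (hk : 0 < k) (hp : 0 < p)
    {X : Finset (ZMod (p*k))} (hX : IsKVertexCover k (cycleG (p*k)) X) (hcard : X.card = p)
    (a : ZMod (p*k)) : (X ∩ WF (p*k) k a).card = 1 := by
  classical
  obtain ⟨ha, hd, hq⟩ := val_decomp hk hp h3 a
  set d := a.val % k with hdd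
  set j0 := a.val / k with hj0
  set F : ℕ → Finset (ZMod (p*k)) := fun j => X ∩ WF (p*k) k (((d + j * k : ℕ)) : ZMod (p*k))
    with hF
  have hdisj : ∀ j ∈ Finset.range p, ∀ j' ∈ Finset.range p, j ≠ j' → Disjoint (F j) (F j') := by
    intro j hj j' hj' hne
    have := WF_pairwise_disjoint hk hp hd (Finset.mem_range.mp hj) (Finset.mem_range.mp hj') hne
    exact Finset.disjoint_of_subset_left Finset.inter_subset_right
      (Finset.disjoint_of_subset_right Finset.inter_subset_right this)
  have hone : ∀ j ∈ Finset.range p, 1 ≤ (F j).card := by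
    intro j _
    obtain ⟨x, hx⟩ := cover_hits_WF h3 hk hp hX (((d + j * k : ℕ)) : ZMod (p*k))
    exact Finset.card_pos.mpr ⟨x, hx⟩
  have hsum : ∑ j ∈ Finset.range p, (F j).card ≤ p := by
    rw [← Finset.card_biUnion hdisj]
    calc ((Finset.range p).biUnion F).card ≤ X.card := by
          apply Finset.card_le_card
          intro x hx
          obtain ⟨j, _, hxj⟩ := Finset.mem_biUnion.mp hx
          exact (Finset.mem_inter.mp hxj).1
      _ = p := hcard
  have hall : ∀ j ∈ Finset.range p, (F j).card = 1 := by
    intro j hj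
    by_contra hne
    have h2 : 2 ≤ (F j).card := by have := hone j hj; omega
    have hlt : ∑ _j ∈ Finset.range p, 1 < ∑ j ∈ Finset.range p, (F j).card :=
      Finset.sum_lt_sum hone ⟨j, hj, by omega⟩
    simp only [Finset.sum_const, Finset.card_range, smul_eq_mul, mul_one] at hlt
    omega
  have := hall j0 (Finset.mem_range.mpr hq)
  rw [hF] at this
  rw [ha]
  exact this

lemma cover_succ_mem {k p : ℕ} (h3 : 3 ≤ p * k) (hk : 0 < k) (hp : 0 < p)
    {X : Finset (ZMod (p*k))} (hX : IsKVertexCover k (cycleG (p*k)) X) (hcard : X.card = p)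
    {x : ZMod (p*k)} (hx : x ∈ X) : x + ((k : ℕ) : ZMod (p*k)) ∈ X := by
  classical
  haveI : NeZero (p*k) := ⟨by omega⟩
  -- X ∩ WF x = {x}
  have h1 : X ∩ WF (p*k) k x = {x} := by
    have hc := cover_window_card_one h3 hk hp hX hcard x
    obtain ⟨b, hb⟩ := Finset.card_eq_one.mp hc
    have hxm : x ∈ X ∩ WF (p*k) k x :=
      Finset.mem_inter.mpr ⟨hx, mem_WF.mpr ⟨0, hk, by simp⟩⟩
    rw [hb] at hxm ⊢
    rw [Finset.mem_singleton.mp hxm]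
  -- unique element of X ∩ WF (x+1)
  have hc2 := cover_window_card_one h3 hk hp hX hcard (x + 1)
  obtain ⟨y, hy⟩ := Finset.card_eq_one.mp hc2
  have hym : y ∈ X ∩ WF (p*k) k (x + 1) := by rw [hy]; exact Finset.mem_singleton_self y
  obtain ⟨hyX, hyW⟩ := Finset.mem_inter.mp hym
  obtain ⟨m, hm, hye⟩ := mem_WF.mp hyW
  rcases Nat.lt_or_ge (m + 1) k with hlt | hge
  · exfalso
    have hyW2 : y ∈ X ∩ WF (p*k) k x := by
      refine Finset.mem_inter.mpr ⟨hyX, mem_WF.mpr ⟨m + 1, hlt, ?_⟩⟩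
      rw [hye]; push_cast; ring
    rw [h1, Finset.mem_singleton] at hyW2
    rw [hyW2] at hye
    have : ((m + 1 : ℕ) : ZMod (p*k)) = ((0 : ℕ) : ZMod (p*k)) := by
      push_cast
      linear_combination -hye
    have := cast_inj_of_lt (show m + 1 < p * k by
      have : k ≤ p * k := Nat.le_mul_of_pos_left k hp; omega)
      (show 0 < p * k by omega) this
    omega
  · have hmk : m = k - 1 := by omega
    have : y = x + ((k : ℕ) : ZMod (p*k)) := by
      rw [hye, hmk]
      have e : ((k : ℕ) : ZMod (p*k)) = 1 + ((k - 1 : ℕ) : ZMod (p*k)) := by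
        rw [← Nat.cast_one, ← Nat.cast_add]
        congr 1
        omega
      rw [e]; ring
    rw [← this]; exact hyX

lemma cast_mod_p {k p : ℕ} (i c : ℕ) :
    ((i + c * k : ℕ) : ZMod (p * k)) = ((i + (c % p) * k : ℕ) : ZMod (p * k)) := by
  rw [ZMod.natCast_eq_natCast_iff]
  exact Nat.ModEq.add_left i ((Nat.mod_modEq c p).symm.mul_right' k)

lemma Dset_cover {k p : ℕ} (h3 : 3 ≤ p * k) (hk : 0 < k) (hp : 0 < p) {i : ℕ}
    (hi1 : 1 ≤ i) (hik : i ≤ k) :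
    IsKVertexCover k (cycleG (p*k))
      ((Finset.Icc 1 p).image (fun j => ((i + (j - 1) * k : ℕ) : ZMod (p * k)))) := by
  intro S hS
  obtain ⟨a, rfl⟩ := pathSupport_window h3 hS
  obtain ⟨m, hm, hmod⟩ := exists_shift a.val i k hk
  obtain ⟨j, hj, hcast⟩ := exists_j hk hp hi1 hik (a.val + m) hmod
  haveI : NeZero (p*k) := ⟨by omega⟩
  refine ⟨_, Finset.mem_image.mpr ⟨j, hj, rfl⟩, ⟨m, hm, ?_⟩⟩
  rw [hcast, Nat.cast_add, ZMod.natCast_rightInverse a]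

lemma Dset_card {k p : ℕ} (hk : 0 < k) (hp : 0 < p) {i : ℕ} (hi1 : 1 ≤ i) (hik : i ≤ k) :
    ((Finset.Icc 1 p).image (fun j => ((i + (j - 1) * k : ℕ) : ZMod (p * k)))).card = p := by
  rw [Finset.card_image_of_injOn, Nat.card_Icc]
  · omega
  intro j hj j' hj' he
  simp only [Finset.coe_Icc, Set.mem_Icc] at hj hj'
  have hpk : 0 < p * k := Nat.mul_pos hp hk
  have hb : i + (j - 1) * k ≤ p * k := by
    have := pk_prod_bound (k := k) (j := j - 1) (p := p) (by omega)
    omega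
  have hb' : i + (j' - 1) * k ≤ p * k := by
    have := pk_prod_bound (k := k) (j := j' - 1) (p := p) (by omega)
    omega
  have := cast_inj_Icc hpk (by omega) hb (by omega) hb' he
  have := Nat.eq_of_mul_eq_mul_right hk (show (j-1)*k = (j'-1)*k by omega)
  omega

lemma tauK_eq_p {k p : ℕ} (h3 : 3 ≤ p * k) (hk : 0 < k) (hp : 0 < p) :
    tauK k (cycleG (p*k)) = p := by
  have hmem : p ∈ {n | ∃ X : Finset (ZMod (p*k)), IsKVertexCover k (cycleG (p*k)) X ∧
      X.card = n} :=
    ⟨_, Dset_cover h3 hk hp (le_refl 1) hk, Dset_card hk hp (le_refl 1) hk⟩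
  refine le_antisymm (Nat.sInf_le hmem) (le_csInf ⟨p, hmem⟩ ?_)
  rintro q ⟨X, hX, rfl⟩
  exact cover_card_ge h3 hk hp hX

theorem stmt4 (k p : ℕ) (hk : 0 < k) (hp : 0 < p) (h3 : 3 ≤ p * k)
    (X : Finset (ZMod (p * k))) :
    (IsKVertexCover k (cycleG (p * k)) X ∧ X.card = tauK k (cycleG (p * k))) ↔
      ∃ i ∈ Finset.Icc 1 k,
        X = (Finset.Icc 1 p).image (fun j => ((i + (j - 1) * k : ℕ) : ZMod (p * k))) := by
  rw [tauK_eq_p h3 hk hp]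
  constructor
  · rintro ⟨hX, hcard⟩
    -- pick a base point
    obtain ⟨x0, hx0⟩ := Finset.card_pos.mp (show 0 < X.card by omega)
    haveI : NeZero (p*k) := ⟨by omega⟩
    have horb : ∀ j : ℕ, x0 + ((j * k : ℕ) : ZMod (p*k)) ∈ X := by
      intro j
      induction j with
      | zero => simpa using hx0
      | succ j ih =>
        have h2 := cover_succ_mem h3 hk hp hX hcard ih
        have e : x0 + (((j+1) * k : ℕ) : ZMod (p*k)) =
            x0 + ((j * k : ℕ) : ZMod (p*k)) + ((k : ℕ) : ZMod (p*k)) := by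
          push_cast; ring
        rw [e]; exact h2
    -- X equals the orbit of x0
    have hXimg : X = (Finset.range p).image (fun j => x0 + ((j * k : ℕ) : ZMod (p*k))) := by
      symm
      apply Finset.eq_of_subset_of_card_le
      · intro x hx
        obtain ⟨j, _, rfl⟩ := Finset.mem_image.mp hx
        exact horb j
      · rw [hcard, Finset.card_image_of_injOn]
        · simp
        intro j hj j' hj' he
        simp only [Finset.coe_range, Set.mem_Iio] at hj hj'
        have he' : ((j * k : ℕ) : ZMod (p*k)) = ((j' * k : ℕ) : ZMod (p*k)) :=
          add_left_cancel he
        have h1 : j * k < p * k := by have := pk_prod_bound (k := k) hj; omega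
        have h2 : j' * k < p * k := by have := pk_prod_bound (k := k) hj'; omega
        have := cast_inj_of_lt h1 h2 he'
        exact Nat.eq_of_mul_eq_mul_right hk this
    -- determine i
    obtain ⟨hdec, hdlt, hqlt⟩ := val_decomp hk hp h3 x0
    set d := x0.val % k with hd
    set j0' := x0.val / k with hj0'
    set i := if d = 0 then k else d with hi
    have hi1 : 1 ≤ i := by rw [hi]; split <;> omega
    have hik : i ≤ k := by rw [hi]; split <;> omega
    have hbase : ∃ j0 < p, x0 = ((i + j0 * k : ℕ) : ZMod (p*k)) := by
      rcases Nat.eq_zero_or_pos d with h0 | h0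
      · refine ⟨(j0' + p - 1) % p, Nat.mod_lt _ hp, ?_⟩
        rw [hdec, h0]
        rw [ZMod.natCast_eq_natCast_iff]
        have hip : i = k := by rw [hi]; simp [h0]
        rw [hip]
        have e1 : k + (j0' + p - 1) % p * k = ((j0' + p - 1) % p + 1) * k := by ring
        have e2 : (j0' + p - 1) % p + 1 ≡ j0' [MOD p] := by
          have h1 : (j0' + p - 1) % p ≡ j0' + p - 1 [MOD p] := Nat.mod_modEq _ p
          have h2 : (j0' + p - 1) % p + 1 ≡ j0' + p - 1 + 1 [MOD p] := h1.add_right 1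
          have e3 : j0' + p - 1 + 1 = j0' + p :=
            Nat.succ_pred_eq_of_pos (Nat.lt_of_lt_of_le hp (Nat.le_add_left p j0'))
          rw [e3] at h2
          exact h2.trans (Nat.add_mod_right j0' p)
        rw [e1, Nat.zero_add]
        exact (e2.mul_right' k).symm
      · exact ⟨j0', hqlt, by rw [hi, if_neg (by omega)]; exact hdec⟩
    obtain ⟨j0, hj0p, hx0e⟩ := hbase
    refine ⟨i, Finset.mem_Icc.mpr ⟨hi1, hik⟩, ?_⟩
    apply Finset.eq_of_subset_of_card_le
    · -- X ⊆ Dset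
      rw [hXimg]
      intro x hx
      obtain ⟨j, hj, rfl⟩ := Finset.mem_image.mp hx
      rw [Finset.mem_range] at hj
      have e1 : x0 + ((j * k : ℕ) : ZMod (p*k)) = ((i + (j0 + j) * k : ℕ) : ZMod (p*k)) := by
        rw [hx0e]
        push_cast
        ring
      rw [e1, cast_mod_p]
      refine Finset.mem_image.mpr ⟨(j0 + j) % p + 1,
        Finset.mem_Icc.mpr ⟨by omega, by have := Nat.mod_lt (j0 + j) hp; omega⟩, ?_⟩
      congr 2
    · rw [hcard, Dset_card hk hp hi1 hik]
  · rintro ⟨i, hi, rfl⟩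
    rw [Finset.mem_Icc] at hi
    exact ⟨Dset_cover h3 hk hp hi.1 hi.2, Dset_card hk hp hi.1 hi.2⟩
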